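/- arXiv:0806.2202 — 3 statements merged into one kernel-verified Lean document; each statement's English description precedes it below -/
import Mathlib

section
/- Let r be a prime and k a positive integer with r ≡ 1 (mod k). Let m be a primitive root modulo r, ζ a primitive r-th root of unity in ℂ, and define δ_k(r) = Σ_{j=0}^{(r-1)/k - 1} ζ^{m^{jk}}. Then the field extension ℚ(δ_k(r))/ℚ is Galois with cyclic Galois group of order k. -/
set_option maxHeartbeats 1000000
set_option synthInstance.maxHeartbeats 400000
open Complex IntermediateField Polynomial

/-- Let `r` be a prime, `k ∣ r - 1` with `k > 0`, `m` a primitive root modulo `r`,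
`ζ = exp(2πi/r)` and `δ = ∑_{j=0}^{(r-1)/k - 1} ζ^{m^{jk}}` the Gaussian period.
Then `ℚ(δ)/ℚ` is a Galois extension with cyclic Galois group of order `k`. -/
theorem stmt_2 (r k : ℕ) (hr : r.Prime) (hk : 0 < k) (hdvd : k ∣ r - 1)
    (m : ℕ) (hm : orderOf (m : ZMod r) = r - 1)
    (ζ : ℂ) (hζ : ζ = Complex.exp (2 * Real.pi * Complex.I / r))
    (δ : ℂ) (hδ : δ = ∑ j ∈ Finset.range ((r - 1) / k), ζ ^ (m ^ (j * k))) :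
    IsGalois ℚ ℚ⟮δ⟯ ∧ IsCyclic (ℚ⟮δ⟯ ≃ₐ[ℚ] ℚ⟮δ⟯) ∧
      Nat.card (ℚ⟮δ⟯ ≃ₐ[ℚ] ℚ⟮δ⟯) = k := by
  classical
  have hr2 : 2 ≤ r := hr.two_le
  have hr0 : r ≠ 0 := hr.pos.ne'
  haveI : NeZero r := ⟨hr0⟩
  haveI : Fact r.Prime := ⟨hr⟩
  set n : ℕ := (r - 1) / k with hn
  have hnk : n * k = r - 1 := Nat.div_mul_cancel hdvd
  have hn1 : 1 ≤ n := Nat.div_pos (Nat.le_of_dvd (by omega) hdvd) hk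
  -- primitive root
  have hζp : IsPrimitiveRoot ζ r := by
    rw [hζ]; exact Complex.isPrimitiveRoot_exp r hr0
  set r' : ℕ+ := ⟨r, hr.pos⟩ with hr'
  have hζp' : IsPrimitiveRoot ζ (r' : ℕ) := hζp
  set E : IntermediateField ℚ ℂ := ℚ⟮ζ⟯ with hE
  have hζint : IsIntegral ℚ ζ := by
    refine IsAlgebraic.isIntegral ⟨X ^ r - 1, ?_, by simpa [sub_eq_zero] using hζp.pow_eq_one⟩
    have : (X ^ r - 1 : ℚ[X]) = X ^ r - C 1 := by simp
    rw [this]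
    exact (Polynomial.monic_X_pow_sub_C 1 hr0).ne_zero
  have hsub : E.toSubalgebra = Algebra.adjoin ℚ {ζ} :=
    adjoin_simple_toSubalgebra_of_isAlgebraic hζint.isAlgebraic
  haveI hCE : IsCyclotomicExtension {(r' : ℕ)} ℚ E :=
    IsCyclotomicExtension.equiv _ ℚ _ (Subalgebra.equivOfEq _ _ hsub.symm)
      (h := hζp'.adjoin_isCyclotomicExtension ℚ)
  haveI : IsGalois ℚ E := IsCyclotomicExtension.isGalois {(r' : ℕ)} ℚ E
  haveI : FiniteDimensional ℚ E := IsCyclotomicExtension.finiteDimensional {(r' : ℕ)} ℚ E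
  have hirr : Irreducible (cyclotomic r' ℚ) := Polynomial.cyclotomic.irreducible_rat r'.pos
  have htot : (r' : ℕ).totient = r - 1 := by
    exact Nat.totient_prime hr
  have hrank : Module.finrank ℚ E = r - 1 := by
    rw [IsCyclotomicExtension.finrank E hirr, htot]
  set μ : E := AdjoinSimple.gen ℚ ζ with hμdef
  have hμ : IsPrimitiveRoot μ (r' : ℕ) := by
    rw [← IsPrimitiveRoot.coe_submonoidClass_iff]
    exact hζp'
  have hordμ : orderOf μ = r := hμ.eq_orderOf.symm
  -- the Galois group and its isomorphism with (ZMod r)ˣ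
  set G := E ≃ₐ[ℚ] E with hG
  set φ : G →* (ZMod r)ˣ := hμ.autToPow ℚ with hφ
  have hinj : Function.Injective φ := hμ.autToPow_injective ℚ
  have hcardU : Fintype.card (ZMod r)ˣ = r - 1 := by
    rw [ZMod.card_units_eq_totient]; simpa using Nat.totient_prime hr
  have hcardG : Fintype.card G = r - 1 := by
    rw [← Nat.card_eq_fintype_card, IsGalois.card_aut_eq_finrank, hrank]
  have hbij : Function.Bijective φ :=
    (Fintype.bijective_iff_injective_and_card φ).mpr ⟨hinj, by rw [hcardG, hcardU]⟩
  set e : G ≃* (ZMod r)ˣ := MulEquiv.ofBijective φ hbij with he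
  haveI : IsCyclic G := isCyclic_of_surjective e.symm e.symm.surjective
  have hcomm : ∀ a b : G, a * b = b * a := fun a b =>
    e.injective (by rw [e.map_mul, e.map_mul, mul_comm])
  -- the generator g with g μ = μ ^ m
  have hmfin : IsOfFinOrder (m : ZMod r) := by
    rw [← orderOf_pos_iff, hm]; omega
  set u : (ZMod r)ˣ := hmfin.isUnit.unit with hu
  have huval : (u : ZMod r) = (m : ℕ) := rfl
  have hordu : orderOf u = r - 1 := by
    rw [← hm, ← huval, orderOf_units]
  set g : G := e.symm u with hg
  have hordg : orderOf g = r - 1 := by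
    rw [← hordu]
    exact orderOf_injective e.symm.toMonoidHom e.symm.injective u
  have hφg : φ g = u := e.apply_symm_apply u
  have hpowμ : ∀ a b : ℕ, a ≡ b [MOD r] → μ ^ a = μ ^ b := by
    intro a b hab
    rw [← pow_mod_orderOf μ a, ← pow_mod_orderOf μ b, hordμ, hab]
  have hgμ : g μ = μ ^ m := by
    have h1 : μ ^ ((φ g : (ZMod r)ˣ) : ZMod r).val = g μ := hμ.autToPow_spec ℚ g
    rw [hφg, huval] at h1
    rw [← h1, ZMod.val_natCast]
    exact hpowμ (m % r) m (Nat.mod_modEq m r)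
  -- the Gaussian period inside E
  set δ'' : E := ∑ j ∈ Finset.range n, μ ^ (m ^ (j * k)) with hδ''
  have hδcoe : (δ'' : ℂ) = δ := by
    rw [hδ, hδ'']
    push_cast
    rfl
  have giter : ∀ (i N : ℕ), (g ^ i) (μ ^ N) = μ ^ (m ^ i * N) := by
    intro i
    induction i with
    | zero => intro N; rw [pow_zero, pow_zero, one_mul]; rfl
    | succ i ih =>
      intro N
      rw [pow_succ, AlgEquiv.mul_apply, map_pow, hgμ, ← pow_mul, ih]
      congr 1
      ring
  have hgiδ : ∀ i : ℕ, (g ^ i) δ'' = ∑ j ∈ Finset.range n, μ ^ (m ^ (j * k + i)) := by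
    intro i
    rw [hδ'', map_sum]
    refine Finset.sum_congr rfl fun j _ => ?_
    rw [giter i]
    congr 1
    rw [pow_add]
    ring
  have hm1 : m ^ (r - 1) ≡ 1 [MOD r] := by
    have hm1' : (m : ZMod r) ^ (r - 1) = 1 := by rw [← hm]; exact pow_orderOf_eq_one _
    have : ((m ^ (r - 1) : ℕ) : ZMod r) = ((1 : ℕ) : ZMod r) := by push_cast; rw [hm1']
    exact (ZMod.natCast_eq_natCast_iff _ _ _).mp this
  have hfixδ : (g ^ k) δ'' = δ'' := by
    rw [hgiδ k, hδ'']
    set f : ℕ → E := fun j => μ ^ (m ^ (j * k)) with hf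
    have h0n : f n = f 0 := by
      show μ ^ (m ^ (n * k)) = μ ^ (m ^ (0 * k))
      rw [hnk, zero_mul, pow_zero]
      exact hpowμ _ _ (by simpa using hm1)
    have h1 := Finset.sum_range_succ' f n
    have h2 := Finset.sum_range_succ f n
    have h3 : (∑ j ∈ Finset.range n, f (j + 1)) + f 0 = (∑ j ∈ Finset.range n, f j) + f n :=
      h1.symm.trans h2
    rw [h0n] at h3
    have h4 := add_right_cancel h3
    calc ∑ j ∈ Finset.range n, μ ^ m ^ (j * k + k)
        = ∑ j ∈ Finset.range n, f (j + 1) := by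
          refine Finset.sum_congr rfl fun j _ => ?_
          show _ = μ ^ (m ^ ((j + 1) * k))
          congr 2
          ring
      _ = ∑ j ∈ Finset.range n, f j := h4
  -- the subgroup H = <g^k>
  set H : Subgroup G := Subgroup.zpowers (g ^ k) with hH
  haveI hHn : H.Normal := ⟨fun a ha b => by
    rw [hcomm b a, mul_assoc, mul_inv_cancel, mul_one]; exact ha⟩
  have hordgk : orderOf (g ^ k) = n := by
    rw [orderOf_pow, hordg, Nat.gcd_eq_right hdvd, hn]
  have hcardH : Nat.card H = n := by rw [hH, Nat.card_zpowers, hordgk]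
  have hδfix : δ'' ∈ IntermediateField.fixedField H := by
    have hstab : H ≤ MulAction.stabilizer G δ'' :=
      Subgroup.zpowers_le.mpr (by show (g ^ k) • δ'' = δ''; exact hfixδ)
    exact fun gg => hstab gg.2
  set F : IntermediateField ℚ E := ℚ⟮δ''⟯ with hF
  have hFle : F ≤ IntermediateField.fixedField H :=
    adjoin_le_iff.mpr (Set.singleton_subset_iff.mpr hδfix)
  have hfixrank : Module.finrank ℚ ↥(IntermediateField.fixedField H) = k := by
    have h1 : Module.finrank ↥(IntermediateField.fixedField H) ↥E = n := by
      rw [IntermediateField.finrank_fixedField_eq_card, hcardH]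
    have h2 := Module.finrank_mul_finrank ℚ ↥(IntermediateField.fixedField H) ↥E
    rw [h1, hrank, ← hnk, mul_comm n k] at h2
    exact Nat.eq_of_mul_eq_mul_right hn1 h2
  -- injectivity of t ↦ m ^ t % r on [0, r-2]
  have hexpinj : ∀ a b : ℕ, a < r - 1 → b < r - 1 → (m ^ a) % r = (m ^ b) % r → a = b := by
    intro a b ha hb hab
    have hza : ((m ^ a : ℕ) : ZMod r) = ((m ^ b : ℕ) : ZMod r) := by
      rw [ZMod.natCast_eq_natCast_iff]
      exact hab
    push_cast at hza
    have hua : u ^ a = u ^ b := by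
      apply Units.ext
      rw [Units.val_pow_eq_pow_val, Units.val_pow_eq_pow_val, huval]
      exact hza
    have hmod := pow_eq_pow_iff_modEq.mp hua
    rw [hordu] at hmod
    rwa [Nat.ModEq, Nat.mod_eq_of_lt ha, Nat.mod_eq_of_lt hb] at hmod
  have hmne : (m : ZMod r) ≠ 0 := by
    intro h0
    obtain ⟨t, ht, ht1⟩ := hmfin.exists_pow_eq_one
    rw [h0, zero_pow (by omega : t ≠ 0)] at ht1
    exact zero_ne_one ht1
  have hexp0 : ∀ t : ℕ, (m ^ t) % r ≠ 0 := by
    intro t h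
    have h1 : ((m ^ t : ℕ) : ZMod r) = 0 := by
      rw [ZMod.natCast_eq_zero_iff]
      exact Nat.dvd_of_mod_eq_zero h
    push_cast at h1
    exact hmne (pow_eq_zero_iff'.mp h1).1
  -- exponents bound
  have hlt : ∀ j : ℕ, j < n → ∀ i : ℕ, i < k → j * k + i < r - 1 := by
    intro j hj i hi
    have : j * k + i < (j + 1) * k := by
      rw [add_mul, one_mul]; omega
    have h2 : (j + 1) * k ≤ n * k := Nat.mul_le_mul_right k hj
    omega
  -- the polynomials representing the conjugates of the period
  set P : ℕ → Polynomial ℚ := fun i => ∑ j ∈ Finset.range n, (X : ℚ[X]) ^ ((m ^ (j * k + i)) % r)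
    with hP
  have hPeval : ∀ i, Polynomial.aeval μ (P i) = (g ^ i) δ'' := by
    intro i
    rw [hgiδ i, hP]
    simp only [map_sum, map_pow, Polynomial.aeval_X]
    refine Finset.sum_congr rfl fun j _ => ?_
    calc μ ^ (m ^ (j * k + i) % r) = μ ^ (m ^ (j * k + i) % orderOf μ) := by rw [hordμ]
      _ = μ ^ (m ^ (j * k + i)) := pow_mod_orderOf μ _
  have hPcoeff : ∀ i a, (P i).coeff a
      = ∑ j ∈ Finset.range n, (if a = (m ^ (j * k + i)) % r then (1 : ℚ) else 0) := by
    intro i a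
    rw [hP]
    simp only [Polynomial.finset_sum_coeff, Polynomial.coeff_X_pow]
  -- distinctness of the conjugates
  have hdist : ∀ i < k, ∀ i' < k, (g ^ i) δ'' = (g ^ i') δ'' → i = i' := by
    intro i hi i' hi' heq
    by_contra hne
    have hik : i < r - 1 := lt_of_lt_of_le hi (Nat.le_of_dvd (by omega) hdvd)
    have hik' : i' < r - 1 := lt_of_lt_of_le hi' (Nat.le_of_dvd (by omega) hdvd)
    have haev : Polynomial.aeval μ (P i - P i') = 0 := by
      rw [map_sub, hPeval, hPeval, heq, sub_self]
    have hdvd2 : minpoly ℚ μ ∣ (P i - P i') := minpoly.dvd ℚ μ haev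
    have hmin : minpoly ℚ μ = cyclotomic r ℚ :=
      (hμ.minpoly_eq_cyclotomic_of_irreducible hirr).symm
    rw [hmin] at hdvd2
    set Q : Polynomial ℚ := P i - P i' with hQ
    have hPii : (P i).coeff (m ^ i % r) = 1 := by
      rw [hPcoeff]
      rw [Finset.sum_eq_single_of_mem 0 (Finset.mem_range.mpr (by omega))]
      · rw [if_pos (by rw [zero_mul, zero_add])]
      · intro j hj hj0
        rw [if_neg]
        intro hcon
        have h5 := hexpinj _ _ (hlt j (Finset.mem_range.mp hj) i hi) hik hcon.symm
        have h6 : j * k = 0 := by omega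
        rcases Nat.mul_eq_zero.mp h6 with h7 | h7
        · exact hj0 h7
        · omega
    have hPi'i : (P i').coeff (m ^ i % r) = 0 := by
      rw [hPcoeff]
      refine Finset.sum_eq_zero fun j hj => ?_
      rw [if_neg]
      intro hcon
      have := hexpinj _ _ (hlt j (Finset.mem_range.mp hj) i' hi') hik hcon.symm
      rcases Nat.eq_zero_or_pos j with h0 | h0
      · rw [h0, zero_mul, zero_add] at this; omega
      · have : k ≤ j * k := Nat.le_mul_of_pos_left k h0
        omega
    have hQne : Q ≠ 0 := by
      intro h
      have := congrArg (fun p => Polynomial.coeff p (m ^ i % r)) h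
      simp only [hQ, Polynomial.coeff_sub, Polynomial.coeff_zero] at this
      rw [hPii, hPi'i] at this
      norm_num at this
    obtain ⟨q, hq⟩ := hdvd2
    have hΦne : (cyclotomic r ℚ) ≠ 0 := cyclotomic_ne_zero r ℚ
    have hqne : q ≠ 0 := by rintro rfl; rw [mul_zero] at hq; exact hQne hq
    have hdegΦ : (cyclotomic r ℚ).natDegree = r - 1 := by
      rw [natDegree_cyclotomic]; simpa using Nat.totient_prime hr
    have hdegP : ∀ i'', (P i'').natDegree ≤ r - 1 := by
      intro i''
      rw [hP]
      refine Polynomial.natDegree_sum_le_of_forall_le _ _ fun j _ => ?_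
      rw [Polynomial.natDegree_X_pow]
      have := Nat.mod_lt (m ^ (j * k + i'')) hr.pos
      omega
    have hdegQ : Q.natDegree ≤ r - 1 :=
      le_trans (Polynomial.natDegree_sub_le _ _) (by
        exact max_le (hdegP i) (hdegP i'))
    have hdegq : q.natDegree = 0 := by
      have := Polynomial.natDegree_mul hΦne hqne
      rw [← hq, hdegΦ] at this
      omega
    obtain ⟨c, rfl⟩ := Polynomial.natDegree_eq_zero.mp hdegq
    have hΦ0 : (cyclotomic r ℚ).coeff 0 = 1 := cyclotomic_coeff_zero ℚ (by omega)
    have hQ0 : Q.coeff 0 = c := by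
      rw [hq, Polynomial.coeff_mul_C, hΦ0, one_mul]
    have hQ0' : Q.coeff 0 = 0 := by
      have hz : ∀ i'', (P i'').coeff 0 = 0 := by
        intro i''
        rw [hPcoeff]
        exact Finset.sum_eq_zero fun j _ => if_neg (fun hcon => hexp0 _ hcon.symm)
      simp only [hQ, Polynomial.coeff_sub, hz, sub_self]
    rw [hQ0] at hQ0'
    rw [hQ0', Polynomial.C_0, mul_zero] at hq
    exact hQne hq
  -- lower bound on the degree of ℚ(δ'')
  have hint : IsIntegral ℚ δ'' := IsIntegral.of_finite ℚ δ''
  have hrankF : Module.finrank ℚ ↥F = (minpoly ℚ δ'').natDegree := by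
    rw [hF]
    exact IntermediateField.adjoin.finrank hint
  have hFrank : k ≤ Module.finrank ℚ ↥F := by
    set p : Polynomial ℚ := minpoly ℚ δ'' with hp
    set p' : Polynomial ↥E := p.map (algebraMap ℚ ↥E) with hp'
    have hp'0 : p' ≠ 0 :=
      (Polynomial.map_ne_zero_iff (algebraMap ℚ ↥E).injective).mpr (minpoly.ne_zero hint)
    have hroots : ∀ i, i < k → (g ^ i) δ'' ∈ p'.roots := by
      intro i hi
      rw [Polynomial.mem_roots hp'0]
      show Polynomial.eval ((g ^ i) δ'') p' = 0
      rw [hp', Polynomial.eval_map, ← Polynomial.aeval_def]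
      have hmm : minpoly ℚ ((g ^ i) δ'') = p := minpoly.algEquiv_eq (g ^ i) δ''
      rw [← hmm]
      exact minpoly.aeval ℚ _
    set s : Finset ↥E := (Finset.range k).image (fun i => (g ^ i) δ'') with hs
    have hscard : s.card = k := by
      rw [hs, Finset.card_image_of_injOn, Finset.card_range]
      intro a ha b hb hab
      exact hdist a (Finset.mem_range.mp ha) b (Finset.mem_range.mp hb) hab
    have hsub2 : s ⊆ p'.roots.toFinset := by
      intro x hx
      rw [Multiset.mem_toFinset]
      obtain ⟨i, hi, rfl⟩ := Finset.mem_image.mp hx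
      exact hroots i (Finset.mem_range.mp hi)
    calc k = s.card := hscard.symm
      _ ≤ p'.roots.toFinset.card := Finset.card_le_card hsub2
      _ ≤ Multiset.card p'.roots := Multiset.toFinset_card_le _
      _ ≤ p'.natDegree := p'.card_roots'
      _ = p.natDegree := by rw [hp', Polynomial.natDegree_map]
      _ = Module.finrank ℚ ↥F := hrankF.symm
  -- F is exactly the fixed field
  have hFeq : F = IntermediateField.fixedField H :=
    IntermediateField.eq_of_le_of_finrank_le hFle (by rw [hfixrank]; exact hFrank)
  haveI hFGal : IsGalois ℚ ↥F := by
    rw [hFeq]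
    exact IsGalois.of_fixedField_normal_subgroup H
  have hFrankk : Module.finrank ℚ ↥F = k := by rw [hFeq, hfixrank]
  have hFcard : Nat.card (↥F ≃ₐ[ℚ] ↥F) = k := by
    rw [IsGalois.card_aut_eq_finrank, hFrankk]
  haveI hFcyc : IsCyclic (↥F ≃ₐ[ℚ] ↥F) := by
    have hsurj := AlgEquiv.restrictNormalHom_surjective (F := ℚ) (K₁ := ↥F) (↥E)
    exact isCyclic_of_surjective _ hsurj
  -- transfer along the isomorphism with ℚ(δ)
  have hmap : IntermediateField.map E.val F = ℚ⟮δ⟯ := by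
    rw [hF]
    exact (IntermediateField.adjoin_map (F := ℚ) (S := {δ''}) E.val).trans (by rw [Set.image_singleton, show E.val δ'' = δ from hδcoe])
  let ψ : ↥F ≃ₐ[ℚ] ↥(ℚ⟮δ⟯ : IntermediateField ℚ ℂ) :=
    (IntermediateField.equivMap F E.val).trans (IntermediateField.equivOfEq hmap)
  refine ⟨IsGalois.of_algEquiv ψ, ?_, ?_⟩
  · exact isCyclic_of_surjective (AlgEquiv.autCongr ψ) (AlgEquiv.autCongr ψ).surjective
  · rw [← Nat.card_congr (AlgEquiv.autCongr ψ).toEquiv]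
    exact hFcard
end

section
/- Let p be an odd prime. Every non-abelian group of order p³ is isomorphic to exactly one of: the Heisenberg group ⟨u,v,w : u^p=v^p=w^p=1, wu=uw, wv=vw, vu=uvw⟩ of exponent p, or the semidirect product C_{p²} ⋊ C_p = ⟨u,v : u^{p²}=v^p=1, vu=u^{p+1}v⟩ of exponent p². -/
/-- The relations of the Heisenberg group
`⟨u, v, w : u^p = v^p = w^p = 1, wu = uw, wv = vw, vu = uvw⟩`. -/
def heisenbergRels (p : ℕ) : Set (FreeGroup (Fin 3)) :=
  {FreeGroup.of 0 ^ p, FreeGroup.of 1 ^ p, FreeGroup.of 2 ^ p,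
    (FreeGroup.of 2 * FreeGroup.of 0) * (FreeGroup.of 0 * FreeGroup.of 2)⁻¹,
    (FreeGroup.of 2 * FreeGroup.of 1) * (FreeGroup.of 1 * FreeGroup.of 2)⁻¹,
    (FreeGroup.of 1 * FreeGroup.of 0) *
      (FreeGroup.of 0 * FreeGroup.of 1 * FreeGroup.of 2)⁻¹}

/-- The relations of `C_{p²} ⋊ C_p = ⟨u, v : u^{p²} = v^p = 1, vu = u^{p+1}v⟩`
(with `u = of 0`, `v = of 1`). -/
def semidirectRels (p : ℕ) : Set (FreeGroup (Fin 2)) :=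
  {FreeGroup.of 0 ^ (p ^ 2), FreeGroup.of 1 ^ p,
    (FreeGroup.of 1 * FreeGroup.of 0) *
      (FreeGroup.of 0 ^ (p + 1) * FreeGroup.of 1)⁻¹}




section CommHelpers
variable {G : Type*} [Group G]

lemma pow_mul_single {a b c : G} (h : b * a = a * b * c) (hca : Commute c a)
    (hcb : Commute c b) : ∀ n : ℕ, b ^ n * a = a * b ^ n * c ^ n := by
  intro n
  induction n with
  | zero => simp
  | succ n ih =>
      calc b ^ (n+1) * a = b ^ n * (b * a) := by rw [pow_succ, mul_assoc]
        _ = b ^ n * (a * b * c) := by rw [h]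
        _ = (b ^ n * a) * (b * c) := by group
        _ = (a * b ^ n * c ^ n) * (b * c) := by rw [ih]
        _ = a * b ^ n * (c ^ n * b) * c := by group
        _ = a * b ^ n * (b * c ^ n) * c := by rw [(hcb.pow_left n).eq]
        _ = a * b ^ (n+1) * c ^ (n+1) := by rw [pow_succ, pow_succ]; group

lemma mul_pow_single {a b c : G} (h : b * a = a * b * c) (hca : Commute c a)
    (hcb : Commute c b) : ∀ n : ℕ, b * a ^ n = a ^ n * b * c ^ n := by
  intro n
  induction n with
  | zero => simp
  | succ n ih =>
      calc b * a ^ (n+1) = (b * a ^ n) * a := by rw [pow_succ, mul_assoc]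
        _ = a ^ n * b * (c ^ n * a) := by rw [ih]; group
        _ = a ^ n * b * (a * c ^ n) := by rw [(hca.pow_left n).eq]
        _ = a ^ n * (b * a) * c ^ n := by group
        _ = a ^ n * (a * b * c) * c ^ n := by rw [h]
        _ = a ^ (n+1) * b * c ^ (n+1) := by rw [pow_succ', pow_succ]; group

lemma pow_mul_pow_comm {a b c : G} (h : b * a = a * b * c) (hca : Commute c a)
    (hcb : Commute c b) (m n : ℕ) : b ^ m * a ^ n = a ^ n * b ^ m * (c ^ m) ^ n :=
  mul_pow_single (pow_mul_single h hca hcb m) (hca.pow_left m)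
    ((hcb.pow_right m).pow_left m) n

/-- Exponentiation formula for groups of nilpotency class two. -/
lemma mul_pow_central {a b c : G} (h : b * a = a * b * c) (hca : Commute c a)
    (hcb : Commute c b) : ∀ n : ℕ, (a * b) ^ n = a ^ n * b ^ n * c ^ n.choose 2 := by
  intro n
  induction n with
  | zero => simp
  | succ n ih =>
      calc (a * b) ^ (n+1) = (a*b)^n * (a * b) := by rw [pow_succ]
        _ = a ^ n * b ^ n * (c ^ n.choose 2 * a) * b := by rw [ih]; group
        _ = a ^ n * b ^ n * (a * c ^ n.choose 2) * b := by rw [(hca.pow_left _).eq]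
        _ = a ^ n * (b ^ n * a) * (c ^ n.choose 2 * b) := by group
        _ = a ^ n * (a * b ^ n * c ^ n) * (b * c ^ n.choose 2) := by
              rw [pow_mul_single h hca hcb n, (hcb.pow_left _).eq]
        _ = a ^ (n+1) * b ^ n * (c ^ n * b) * c ^ n.choose 2 := by rw [pow_succ']; group
        _ = a ^ (n+1) * b ^ n * (b * c ^ n) * c ^ n.choose 2 := by rw [(hcb.pow_left _).eq]
        _ = a ^ (n+1) * b ^ (n+1) * (c ^ n * c ^ n.choose 2) := by rw [pow_succ]; group
        _ = a ^ (n+1) * b ^ (n+1) * c ^ ((n+1).choose 2) := by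
              rw [← pow_add, Nat.choose_succ_succ, Nat.choose_one_right, Nat.add_comm]

end CommHelpers

section GenHelpers
variable {G : Type*} [Group G]

/-- If a group is generated by two commuting elements, it is commutative. -/
lemma comm_of_closure_pair {u v : G} (hgen : Subgroup.closure {u, v} = ⊤)
    (huv : u * v = v * u) : ∀ a b : G, a * b = b * a := by
  have hcent : ∀ a : G, a ∈ Subgroup.centralizer {u, v} := by
    intro a
    have ha : a ∈ Subgroup.closure ({u, v} : Set G) := hgen ▸ Subgroup.mem_top a
    refine Subgroup.closure_induction (fun x hx => ?_) (Subgroup.one_mem _)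
      (fun x y _ _ hx hy => Subgroup.mul_mem _ hx hy)
      (fun x _ hx => Subgroup.inv_mem _ hx) ha
    rcases hx with rfl | rfl
    · refine Subgroup.mem_centralizer_iff.mpr ?_
      intro g hg
      rcases hg with rfl | rfl
      exacts [rfl, huv.symm]
    · refine Subgroup.mem_centralizer_iff.mpr ?_
      intro g hg
      rcases hg with rfl | rfl
      exacts [huv, rfl]
  intro a b
  have hb : b ∈ Subgroup.closure ({u, v} : Set G) := hgen ▸ Subgroup.mem_top b
  refine Subgroup.closure_induction (fun x hx => ?_) (by simp)
    (fun x y _ _ hx hy => by rw [← mul_assoc, hx, mul_assoc, hy, mul_assoc])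
    (fun x _ hx => ?_) hb
  · exact (Subgroup.mem_centralizer_iff.mp (hcent a) x hx).symm
  · have := hx
    calc a * x⁻¹ = x⁻¹ * (x * a) * x⁻¹ := by group
      _ = x⁻¹ * (a * x) * x⁻¹ := by rw [← hx]
      _ = x⁻¹ * a := by group

/-- A relator maps to `1` in the presented group. -/
lemma presented_rel_one {α : Type*} {rels : Set (FreeGroup α)} {r : FreeGroup α}
    (h : r ∈ rels) : PresentedGroup.mk rels r = 1 :=
  (QuotientGroup.eq_one_iff r).mpr (Subgroup.subset_normalClosure h)

lemma closure_heis_gen (p : ℕ) :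
    Subgroup.closure {(PresentedGroup.of 0 : PresentedGroup (heisenbergRels p)),
      PresentedGroup.of 1, PresentedGroup.of 2} = ⊤ := by
  rw [← PresentedGroup.closure_range_of]
  congr 1
  ext x
  constructor
  · rintro (rfl | rfl | rfl) <;> exact ⟨_, rfl⟩
  · rintro ⟨i, rfl⟩
    fin_cases i
    · exact Or.inl rfl
    · exact Or.inr (Or.inl rfl)
    · exact Or.inr (Or.inr rfl)

lemma closure_semi_gen (p : ℕ) :
    Subgroup.closure {(PresentedGroup.of 0 : PresentedGroup (semidirectRels p)),
      PresentedGroup.of 1} = ⊤ := by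
  rw [← PresentedGroup.closure_range_of]
  congr 1
  ext x
  constructor
  · rintro (rfl | rfl) <;> exact ⟨_, rfl⟩
  · rintro ⟨i, rfl⟩
    fin_cases i
    · exact Or.inl rfl
    · exact Or.inr rfl

end GenHelpers

section NormalForms
variable {G : Type*} [Group G] {p : ℕ}

lemma pow_mod_eq {x : G} {n : ℕ} (h : x ^ n = 1) (a : ℕ) : x ^ a = x ^ (a % n) := by
  conv_lhs => rw [← Nat.div_add_mod a n]
  rw [pow_add, pow_mul, h, one_pow, one_mul]

lemma inv_pow_eq {x : G} {n : ℕ} (hn : 0 < n) (h : x ^ n = 1) (k : ℕ) :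
    (x ^ k)⁻¹ = x ^ (k * (n - 1)) := by
  refine inv_eq_of_mul_eq_one_right ?_
  rw [← pow_add]
  have hkn : k + k * (n - 1) = n * k := by
    cases n with
    | zero => omega
    | succ m => simp [Nat.succ_sub_one, Nat.mul_succ, Nat.succ_mul]; ring
  rw [hkn, pow_mul, h, one_pow]

variable {p : ℕ}

lemma heis_form (hp : 0 < p) {u v w : G} (hgen : Subgroup.closure {u, v, w} = ⊤)
    (hu : u ^ p = 1) (hv : v ^ p = 1) (hw : w ^ p = 1)
    (hwu : Commute w u) (hwv : Commute w v) (hvu : v * u = u * v * w) :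
    ∀ x : G, ∃ a b c : ℕ, a < p ∧ b < p ∧ c < p ∧ x = u ^ a * v ^ b * w ^ c := by
  -- the set of normal forms (unbounded exponents)
  set S : Set G := {x | ∃ a b c : ℕ, x = u ^ a * v ^ b * w ^ c} with hS
  have hmem : ∀ a b c : ℕ, u ^ a * v ^ b * w ^ c ∈ S := fun a b c => ⟨a, b, c, rfl⟩
  have hmul : ∀ x ∈ S, ∀ y ∈ S, x * y ∈ S := by
    rintro x ⟨a, b, c, rfl⟩ y ⟨d, e, f, rfl⟩
    refine ⟨a + d, b + e, b * d + (c + f), ?_⟩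
    have h1 : v ^ b * u ^ d = u ^ d * v ^ b * (w ^ b) ^ d := pow_mul_pow_comm hvu hwu hwv b d
    calc u ^ a * v ^ b * w ^ c * (u ^ d * v ^ e * w ^ f)
        = u ^ a * v ^ b * (w ^ c * u ^ d) * v ^ e * w ^ f := by group
      _ = u ^ a * v ^ b * (u ^ d * w ^ c) * v ^ e * w ^ f := by rw [(hwu.pow_pow c d).eq]
      _ = u ^ a * (v ^ b * u ^ d) * (w ^ c * v ^ e) * w ^ f := by group
      _ = u ^ a * (u ^ d * v ^ b * (w ^ b) ^ d) * (v ^ e * w ^ c) * w ^ f := by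
            rw [h1, (hwv.pow_pow c e).eq]
      _ = u ^ (a + d) * v ^ b * ((w ^ b) ^ d * v ^ e) * (w ^ c * w ^ f) := by
            rw [pow_add]; group
      _ = u ^ (a + d) * v ^ b * (v ^ e * (w ^ b) ^ d) * (w ^ c * w ^ f) := by
            rw [((hwv.pow_pow b e).pow_left d).eq]
      _ = u ^ (a + d) * v ^ (b + e) * ((w ^ b) ^ d * (w ^ c * w ^ f)) := by
            rw [pow_add]; group
      _ = u ^ (a + d) * v ^ (b + e) * w ^ (b * d + (c + f)) := by
            rw [← pow_mul, ← pow_add, ← pow_add]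
  have hinv : ∀ x ∈ S, x⁻¹ ∈ S := by
    rintro x ⟨a, b, c, rfl⟩
    have : (u ^ a * v ^ b * w ^ c)⁻¹
        = w ^ (c * (p - 1)) * (v ^ (b * (p - 1)) * u ^ (a * (p - 1))) := by
      rw [mul_inv_rev, mul_inv_rev, inv_pow_eq hp hu, inv_pow_eq hp hv, inv_pow_eq hp hw]
    rw [this]
    refine hmul _ ?_ _ (hmul _ ?_ _ ?_)
    · simpa using hmem 0 0 (c * (p-1))
    · simpa using hmem 0 (b * (p-1)) 0
    · simpa using hmem (a * (p-1)) 0 0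
  have hSsub : ∀ x : G, x ∈ S := by
    intro x
    have hx : x ∈ Subgroup.closure ({u, v, w} : Set G) := hgen ▸ Subgroup.mem_top x
    refine Subgroup.closure_induction (fun y hy => ?_) ⟨0, 0, 0, by simp⟩
      (fun y z _ _ hy hz => hmul y hy z hz) (fun y _ hy => hinv y hy) hx
    rcases hy with rfl | rfl | rfl
    · simpa using hmem 1 0 0
    · simpa using hmem 0 1 0
    · simpa using hmem 0 0 1
  intro x
  obtain ⟨a, b, c, rfl⟩ := hSsub x
  exact ⟨a % p, b % p, c % p, Nat.mod_lt _ hp, Nat.mod_lt _ hp, Nat.mod_lt _ hp,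
    by rw [pow_mod_eq hu a, pow_mod_eq hv b, pow_mod_eq hw c]⟩


lemma odd_prime_dvd_choose_two (hp : p.Prime) (hodd : Odd p) : p ∣ p.choose 2 := by
  have heven : Even (p - 1) := Nat.Odd.sub_odd hodd odd_one
  have : p.choose 2 = p * ((p - 1) / 2) := by
    rw [Nat.choose_two_right, Nat.mul_div_assoc p heven.two_dvd]
  exact this ▸ Dvd.intro _ rfl

lemma heis_exp (hp : p.Prime) (hodd : Odd p) {u v w : G}
    (hgen : Subgroup.closure {u, v, w} = ⊤)
    (hu : u ^ p = 1) (hv : v ^ p = 1) (hw : w ^ p = 1)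
    (hwu : Commute w u) (hwv : Commute w v) (hvu : v * u = u * v * w) :
    ∀ x : G, x ^ p = 1 := by
  obtain ⟨k, hk⟩ := odd_prime_dvd_choose_two hp hodd
  intro x
  obtain ⟨a, b, c, _, _, _, rfl⟩ := heis_form hp.pos hgen hu hv hw hwu hwv hvu x
  have hCA : Commute ((w ^ b) ^ a) (u ^ a) := ((hwu.pow_left b).pow_left a).pow_right a
  have hCB : Commute ((w ^ b) ^ a) (v ^ b * w ^ c) :=
    (((hwv.pow_left b).pow_left a).pow_right b).mul_right
      (((Commute.refl w).pow_pow b c).pow_left a)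
  have hBA : (v ^ b * w ^ c) * u ^ a = u ^ a * (v ^ b * w ^ c) * (w ^ b) ^ a := by
    calc v ^ b * w ^ c * u ^ a = v ^ b * (u ^ a * w ^ c) := by
          rw [mul_assoc, (hwu.pow_pow c a).eq]
      _ = (v ^ b * u ^ a) * w ^ c := by rw [mul_assoc]
      _ = (u ^ a * v ^ b * (w ^ b) ^ a) * w ^ c := by rw [pow_mul_pow_comm hvu hwu hwv b a]
      _ = u ^ a * v ^ b * ((w ^ b) ^ a * w ^ c) := by group
      _ = u ^ a * v ^ b * (w ^ c * (w ^ b) ^ a) := by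
          rw [(((Commute.refl w).pow_pow b c).pow_left a).eq]
      _ = u ^ a * (v ^ b * w ^ c) * (w ^ b) ^ a := by group
  have hx : u ^ a * v ^ b * w ^ c = u ^ a * (v ^ b * w ^ c) := by rw [mul_assoc]
  rw [hx, mul_pow_central hBA hCA hCB p]
  have h1 : (u ^ a) ^ p = 1 := by rw [← pow_mul, mul_comm, pow_mul, hu, one_pow]
  have h2 : (v ^ b * w ^ c) ^ p = 1 := by
    rw [(hwv.symm.pow_pow b c).mul_pow, ← pow_mul, mul_comm b p, pow_mul, hv, one_pow,
      ← pow_mul, mul_comm c p, pow_mul, hw, one_pow, one_mul]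
  have h3 : ((w ^ b) ^ a) ^ p.choose 2 = 1 := by
    rw [← pow_mul, ← pow_mul, hk]
    have : b * (a * (p * k)) = p * (b * a * k) := by ring
    rw [this, pow_mul, hw, one_pow]
  rw [h1, h2, h3, one_mul, one_mul]

lemma semi_conj_pow {u v : G} (hvu : v * u = u ^ (p + 1) * v) :
    ∀ b k : ℕ, v ^ b * u ^ k = u ^ (k * (p + 1) ^ b) * v ^ b := by
  have h1 : ∀ k : ℕ, v * u ^ k = u ^ (k * (p + 1)) * v := by
    intro k
    induction k with
    | zero => simp
    | succ k ih =>
        calc v * u ^ (k+1) = (v * u ^ k) * u := by rw [pow_succ, mul_assoc]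
          _ = u ^ (k * (p+1)) * (v * u) := by rw [ih, mul_assoc]
          _ = u ^ (k * (p+1)) * (u ^ (p+1) * v) := by rw [hvu]
          _ = u ^ ((k+1) * (p+1)) * v := by rw [← mul_assoc, ← pow_add, Nat.add_mul, one_mul]
  intro b
  induction b with
  | zero => simp
  | succ b ih =>
      intro k
      calc v ^ (b+1) * u ^ k = v ^ b * (v * u ^ k) := by rw [pow_succ']; group
        _ = v ^ b * (u ^ (k * (p+1)) * v) := by rw [h1]
        _ = (v ^ b * u ^ (k * (p+1))) * v := by rw [mul_assoc]
        _ = u ^ (k * (p+1) * (p+1) ^ b) * v ^ b * v := by rw [ih]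
        _ = u ^ (k * (p+1) ^ (b+1)) * v ^ (b+1) := by
              have he : k * (p + 1) ^ (b+1) = k * (p + 1) * (p + 1) ^ b := by
                rw [pow_succ]; ring
              rw [he, pow_succ, mul_assoc]

lemma semi_form (hp : 0 < p) {u v : G} (hgen : Subgroup.closure {u, v} = ⊤)
    (hu : u ^ p ^ 2 = 1) (hv : v ^ p = 1) (hvu : v * u = u ^ (p + 1) * v) :
    ∀ x : G, ∃ a b : ℕ, a < p ^ 2 ∧ b < p ∧ x = u ^ a * v ^ b := by
  have hp2 : 0 < p ^ 2 := by positivity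
  set S : Set G := {x | ∃ a b : ℕ, x = u ^ a * v ^ b} with hS
  have hmem : ∀ a b : ℕ, u ^ a * v ^ b ∈ S := fun a b => ⟨a, b, rfl⟩
  have hmul : ∀ x ∈ S, ∀ y ∈ S, x * y ∈ S := by
    rintro x ⟨a, b, rfl⟩ y ⟨d, e, rfl⟩
    refine ⟨a + d * (p + 1) ^ b, b + e, ?_⟩
    calc u ^ a * v ^ b * (u ^ d * v ^ e)
        = u ^ a * (v ^ b * u ^ d) * v ^ e := by group
      _ = u ^ a * (u ^ (d * (p+1) ^ b) * v ^ b) * v ^ e := by rw [semi_conj_pow hvu]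
      _ = u ^ (a + d * (p+1) ^ b) * v ^ (b + e) := by rw [pow_add, pow_add]; group
  have hinv : ∀ x ∈ S, x⁻¹ ∈ S := by
    rintro x ⟨a, b, rfl⟩
    have : (u ^ a * v ^ b)⁻¹ = v ^ (b * (p - 1)) * u ^ (a * (p ^ 2 - 1)) := by
      rw [mul_inv_rev, inv_pow_eq hp2 hu, inv_pow_eq hp hv]
    rw [this]
    refine hmul _ ?_ _ ?_
    · simpa using hmem 0 (b * (p - 1))
    · simpa using hmem (a * (p ^ 2 - 1)) 0
  have hSsub : ∀ x : G, x ∈ S := by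
    intro x
    have hx : x ∈ Subgroup.closure ({u, v} : Set G) := hgen ▸ Subgroup.mem_top x
    refine Subgroup.closure_induction (fun y hy => ?_) ⟨0, 0, by simp⟩
      (fun y z _ _ hy hz => hmul y hy z hz) (fun y _ hy => hinv y hy) hx
    rcases hy with rfl | rfl
    · simpa using hmem 1 0
    · simpa using hmem 0 1
  intro x
  obtain ⟨a, b, rfl⟩ := hSsub x
  exact ⟨a % p ^ 2, b % p, Nat.mod_lt _ hp2, Nat.mod_lt _ hp,
    by rw [pow_mod_eq hu a, pow_mod_eq hv b]⟩

end NormalForms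



section GAux
variable {p : ℕ} {G : Type*} [Group G]

lemma center_facts (hp : p.Prime) (hG : Nat.card G = p ^ 3)
    (hnab : ¬ ∀ a b : G, a * b = b * a) :
    Nat.card (Subgroup.center G) = p ∧
    (∀ x y : G, y⁻¹ * x⁻¹ * y * x ∈ Subgroup.center G) ∧
    (∀ x : G, x ^ p ∈ Subgroup.center G) ∧
    (∀ z ∈ Subgroup.center G, z ^ p = 1) := by
  haveI : Fact p.Prime := ⟨hp⟩
  have hfin : Finite G := Nat.finite_of_card_ne_zero (by simp [hG, hp.pos.ne'])
  have hpG : IsPGroup p G := IsPGroup.of_card hG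
  haveI : Nontrivial G := by
    rw [← Finite.one_lt_card_iff_nontrivial, hG]
    exact Nat.one_lt_pow (by norm_num) hp.one_lt
  haveI := IsPGroup.center_nontrivial hpG
  -- card of the center
  obtain ⟨k, hk3, hkcard⟩ := (Nat.dvd_prime_pow hp).1
    (hG ▸ Subgroup.card_subgroup_dvd_card (Subgroup.center G))
  have hk0 : k ≠ 0 := by
    rintro rfl
    have := Finite.one_lt_card_iff_nontrivial.mpr ‹Nontrivial (Subgroup.center G)›
    rw [pow_zero] at hkcard
    omega
  have hquot : Nat.card G = Nat.card (G ⧸ Subgroup.center G) * Nat.card (Subgroup.center G) :=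
    Subgroup.card_eq_card_quotient_mul_card_subgroup _
  have hppos : 0 < p := hp.pos
  have hk1 : k = 1 := by
    by_contra hk1
    -- then k ≥ 2, so the quotient has card dividing p, hence cyclic, hence G abelian
    have hk2 : 2 ≤ k := by omega
    have hqcard : Nat.card (G ⧸ Subgroup.center G) * p ^ k = p ^ 3 := by
      rw [← hkcard, ← hquot, hG]
    have hdvd : Nat.card (G ⧸ Subgroup.center G) ∣ p := by
      have hq : Nat.card (G ⧸ Subgroup.center G) = p ^ 3 / p ^ k :=
        (Nat.div_eq_of_eq_mul_left (pow_pos hppos k) hqcard.symm).symm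
      rw [hq, Nat.pow_div hk3 hppos]
      calc p ^ (3 - k) ∣ p ^ 1 := pow_dvd_pow p (by omega)
        _ = p := pow_one p
    haveI : IsCyclic (G ⧸ Subgroup.center G) := isCyclic_of_card_dvd_prime hdvd
    exact hnab (commutative_of_cyclic_center_quotient (QuotientGroup.mk' (Subgroup.center G))
      (by rw [QuotientGroup.ker_mk']))
  rw [hk1, pow_one] at hkcard
  have hqcard : Nat.card (G ⧸ Subgroup.center G) = p ^ 2 := by
    have := hquot
    rw [hG, hkcard] at this
    have hq : Nat.card (G ⧸ Subgroup.center G) * p = p ^ 3 := this.symm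
    have : p ^ 3 = p ^ 2 * p := by ring
    rw [this] at hq
    exact Nat.eq_of_mul_eq_mul_right hppos hq
  have hqcomm : ∀ a b : G ⧸ Subgroup.center G, a * b = b * a :=
    IsPGroup.commutative_of_card_eq_prime_sq hqcard
  refine ⟨hkcard, ?_, ?_, ?_⟩
  · intro x y
    rw [← QuotientGroup.ker_mk' (Subgroup.center G), MonoidHom.mem_ker]
    simp only [map_mul, map_inv]
    rw [mul_assoc, hqcomm ((QuotientGroup.mk' (Subgroup.center G)) y)
      ((QuotientGroup.mk' (Subgroup.center G)) x)]
    group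
  · intro x
    -- the quotient is not cyclic
    have hnotcyc : ¬ IsCyclic (G ⧸ Subgroup.center G) := by
      intro hc
      exact hnab (commutative_of_cyclic_center_quotient (QuotientGroup.mk' (Subgroup.center G))
        (by rw [QuotientGroup.ker_mk']))
    have hx : orderOf (QuotientGroup.mk' (Subgroup.center G) x) ∣ p ^ 2 :=
      hqcard ▸ orderOf_dvd_natCard _
    obtain ⟨j, hj2, hjord⟩ := (Nat.dvd_prime_pow hp).1 hx
    have hj1 : j ≤ 1 := by
      by_contra hj
      have : j = 2 := by omega
      rw [this] at hjord
      exact hnotcyc (isCyclic_of_orderOf_eq_card _ (by rw [hjord, hqcard]))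
    have hdvdp : orderOf (QuotientGroup.mk' (Subgroup.center G) x) ∣ p := by
      rw [hjord]
      exact pow_dvd_pow p hj1 |>.trans (by rw [pow_one])
    have : (QuotientGroup.mk' (Subgroup.center G) x) ^ p = 1 :=
      orderOf_dvd_iff_pow_eq_one.mp hdvdp
    rwa [← map_pow, ← MonoidHom.mem_ker, QuotientGroup.ker_mk'] at this
  · intro z hz
    have : (⟨z, hz⟩ : Subgroup.center G) ^ p = 1 := by
      have := pow_card_eq_one' (G := Subgroup.center G) (x := ⟨z, hz⟩)
      rwa [hkcard] at this
    simpa [Subtype.ext_iff] using this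

end GAux



section SubgroupAux
variable {p : ℕ} {G : Type*} [Group G]

lemma comm_of_card_le_p2 (hp : p.Prime) {k : ℕ} (hk : k ≤ 2) {H : Type*} [Group H]
    (hH : Nat.card H = p ^ k) : ∀ x y : H, x * y = y * x := by
  haveI : Fact p.Prime := ⟨hp⟩
  interval_cases k
  · rw [pow_zero] at hH
    haveI := (Nat.card_eq_one_iff_unique.mp hH).1
    intro x y
    exact Subsingleton.elim _ _
  · rw [pow_one] at hH
    haveI : IsCyclic H := isCyclic_of_prime_card hH
    letI : CommGroup H := IsCyclic.commGroup
    exact fun x y => mul_comm x y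
  · exact IsPGroup.commutative_of_card_eq_prime_sq hH

lemma closure_pair_eq_top (hp : p.Prime) (hG : Nat.card G = p ^ 3) {a b : G}
    (hab : a * b ≠ b * a) : Subgroup.closure {a, b} = ⊤ := by
  haveI : Fact p.Prime := ⟨hp⟩
  have hfin : Finite G := Nat.finite_of_card_ne_zero (by simp [hG, hp.pos.ne'])
  set H := Subgroup.closure ({a, b} : Set G) with hH
  have haH : a ∈ H := Subgroup.subset_closure (by simp)
  have hbH : b ∈ H := Subgroup.subset_closure (by simp)
  obtain ⟨k, hk3, hkcard⟩ := (Nat.dvd_prime_pow hp).1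
    (hG ▸ Subgroup.card_subgroup_dvd_card H)
  have hk : ¬ k ≤ 2 := by
    intro hk2
    have := comm_of_card_le_p2 hp hk2 hkcard (⟨a, haH⟩ : H) ⟨b, hbH⟩
    exact hab (Subtype.ext_iff.mp this)
  have hk3' : k = 3 := by omega
  refine Subgroup.eq_top_of_card_eq H ?_
  rw [hkcard, hk3', hG]

lemma top_of_proper (hp : p.Prime) (hG : Nat.card G = p ^ 3) {U H : Subgroup G}
    (hU : Nat.card U = p ^ 2) (hUH : U ≤ H) {g : G} (hg : g ∈ H) (hgU : g ∉ U) :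
    H = ⊤ := by
  haveI : Fact p.Prime := ⟨hp⟩
  have hfin : Finite G := Nat.finite_of_card_ne_zero (by simp [hG, hp.pos.ne'])
  obtain ⟨k, hk3, hkcard⟩ := (Nat.dvd_prime_pow hp).1
    (hG ▸ Subgroup.card_subgroup_dvd_card H)
  have hdvd : p ^ 2 ∣ p ^ k := by
    rw [← hU, ← hkcard]
    exact Subgroup.card_dvd_of_le hUH
  have hk2 : 2 ≤ k := (Nat.pow_dvd_pow_iff_le_right hp.one_lt).mp hdvd
  have hk3' : k = 2 ∨ k = 3 := by omega
  rcases hk3' with rfl | rfl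
  · exfalso
    have : U = H := Subgroup.eq_of_le_of_card_ge hUH (by rw [hU, hkcard])
    exact hgU (this ▸ hg)
  · exact Subgroup.eq_top_of_card_eq H (by rw [hkcard, hG])

end SubgroupAux

section HeisCase
variable {p : ℕ} {G : Type*} [Group G]

/-- Cardinality bound for the Heisenberg presented group. -/
lemma heis_presented_card (hp : 0 < p) :
    Nat.card (PresentedGroup (heisenbergRels p)) ≤ p ^ 3 ∧
      Finite (PresentedGroup (heisenbergRels p)) := by
  set P := PresentedGroup (heisenbergRels p)
  set U : P := PresentedGroup.of 0
  set V : P := PresentedGroup.of 1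
  set W : P := PresentedGroup.of 2
  have hU : U ^ p = 1 := by
    have := presented_rel_one (rels := heisenbergRels p) (r := FreeGroup.of 0 ^ p)
      (by simp [heisenbergRels])
    rw [map_pow] at this; exact this
  have hV : V ^ p = 1 := by
    have := presented_rel_one (rels := heisenbergRels p) (r := FreeGroup.of 1 ^ p)
      (by simp [heisenbergRels])
    rw [map_pow] at this; exact this
  have hW : W ^ p = 1 := by
    have := presented_rel_one (rels := heisenbergRels p) (r := FreeGroup.of 2 ^ p)
      (by simp [heisenbergRels])
    rw [map_pow] at this; exact this
  have hWU : W * U = U * W := by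
    have := presented_rel_one (rels := heisenbergRels p)
      (r := (FreeGroup.of 2 * FreeGroup.of 0) * (FreeGroup.of 0 * FreeGroup.of 2)⁻¹)
      (by simp [heisenbergRels])
    rw [map_mul, map_inv, mul_inv_eq_one, map_mul, map_mul] at this
    exact this
  have hWV : W * V = V * W := by
    have := presented_rel_one (rels := heisenbergRels p)
      (r := (FreeGroup.of 2 * FreeGroup.of 1) * (FreeGroup.of 1 * FreeGroup.of 2)⁻¹)
      (by simp [heisenbergRels])
    rw [map_mul, map_inv, mul_inv_eq_one, map_mul, map_mul] at this
    exact this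
  have hVU : V * U = U * V * W := by
    have := presented_rel_one (rels := heisenbergRels p)
      (r := (FreeGroup.of 1 * FreeGroup.of 0) *
        (FreeGroup.of 0 * FreeGroup.of 1 * FreeGroup.of 2)⁻¹)
      (by simp [heisenbergRels])
    rw [map_mul, map_inv, mul_inv_eq_one, map_mul, map_mul, map_mul] at this
    exact this
  have hform := heis_form hp (closure_heis_gen p) hU hV hW hWU hWV hVU
  have hsurj : Function.Surjective
      (fun t : Fin p × Fin p × Fin p => U ^ (t.1 : ℕ) * V ^ (t.2.1 : ℕ) * W ^ (t.2.2 : ℕ)) := by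
    intro x
    obtain ⟨a, b, c, ha, hb, hc, rfl⟩ := hform x
    exact ⟨⟨⟨a, ha⟩, ⟨b, hb⟩, ⟨c, hc⟩⟩, rfl⟩
  haveI : Finite P := Finite.of_surjective _ hsurj
  constructor
  · have := Nat.card_le_card_of_surjective _ hsurj
    calc Nat.card P ≤ Nat.card (Fin p × Fin p × Fin p) := this
      _ = p ^ 3 := by simp [Nat.card_prod]; ring
  · infer_instance

lemma heis_iso (hp : p.Prime) (hodd : Odd p) (hG : Nat.card G = p ^ 3)
    (hnab : ¬ ∀ a b : G, a * b = b * a) (hexp : ∀ x : G, x ^ p = 1) :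
    Nonempty (G ≃* PresentedGroup (heisenbergRels p)) := by
  push_neg at hnab
  obtain ⟨a, b, hab⟩ := hnab
  obtain ⟨hZcard, hcommZ, hpowZ, hZexp⟩ := center_facts hp hG
    (by push_neg; exact ⟨a, b, hab⟩)
  set c : G := b⁻¹ * a⁻¹ * b * a with hc
  have hcZ : c ∈ Subgroup.center G := hcommZ a b
  have hba : b * a = a * b * c := by rw [hc]; group
  have hca : Commute c a := ((Subgroup.mem_center_iff.mp hcZ) a).symm
  have hcb : Commute c b := ((Subgroup.mem_center_iff.mp hcZ) b).symm
  set f : Fin 3 → G := ![a, b, c] with hf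
  have hrels : ∀ r ∈ heisenbergRels p, FreeGroup.lift f r = 1 := by
    intro r hr
    simp only [heisenbergRels, Set.mem_insert_iff, Set.mem_singleton_iff] at hr
    rcases hr with rfl | rfl | rfl | rfl | rfl | rfl
    · simp only [map_pow, FreeGroup.lift_apply_of, hf]
      simpa using hexp a
    · simp only [map_pow, FreeGroup.lift_apply_of, hf]
      simpa using hexp b
    · simp only [map_pow, FreeGroup.lift_apply_of, hf]
      simpa using hexp c
    · simp only [map_mul, map_inv, FreeGroup.lift_apply_of, hf, mul_inv_eq_one]
      simpa using hca.eq
    · simp only [map_mul, map_inv, FreeGroup.lift_apply_of, hf, mul_inv_eq_one]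
      simpa using hcb.eq
    · simp only [map_mul, map_inv, FreeGroup.lift_apply_of, hf, mul_inv_eq_one]
      simpa using hba
  set φ : PresentedGroup (heisenbergRels p) →* G := PresentedGroup.toGroup hrels with hφ
  have hφa : φ (PresentedGroup.of 0) = a := by simp [hφ, PresentedGroup.toGroup.of, hf]
  have hφb : φ (PresentedGroup.of 1) = b := by simp [hφ, PresentedGroup.toGroup.of, hf]
  have hsurj : Function.Surjective φ := by
    rw [← MonoidHom.range_eq_top]
    rw [← top_le_iff, ← closure_pair_eq_top hp hG hab, Subgroup.closure_le]
    rintro x (rfl | rfl)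
    · exact ⟨PresentedGroup.of 0, hφa⟩
    · exact ⟨PresentedGroup.of 1, hφb⟩
  obtain ⟨hcard, hfin⟩ := heis_presented_card (p := p) hp.pos
  have hbij : Function.Bijective φ :=
    hsurj.bijective_of_nat_card_le (by rw [hG]; exact hcard)
  exact ⟨(MulEquiv.ofBijective φ hbij).symm⟩

end HeisCase

section SemiGens
variable {p : ℕ} {G : Type*} [Group G]

lemma semi_gens (hp : p.Prime) (hodd : Odd p) (hG : Nat.card G = p ^ 3)
    (hnab : ¬ ∀ a b : G, a * b = b * a) {x : G} (hx : x ^ p ≠ 1) :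
    ∃ u v : G, u ^ p ^ 2 = 1 ∧ v ^ p = 1 ∧ v * u = u ^ (p + 1) * v ∧
      Subgroup.closure {u, v} = ⊤ := by
  haveI : Fact p.Prime := ⟨hp⟩
  have hfin : Finite G := Nat.finite_of_card_ne_zero (by simp [hG, hp.pos.ne'])
  obtain ⟨hZcard, hcommZ, hpowZ, hZexp⟩ := center_facts hp hG hnab
  -- Step 1: the order of x is p^2
  have hnotcyc : ∀ y : G, orderOf y ≠ p ^ 3 := by
    intro y hy
    haveI : IsCyclic G := isCyclic_of_orderOf_eq_card y (by rw [hy, hG])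
    letI : CommGroup G := IsCyclic.commGroup
    exact hnab fun a b => mul_comm a b
  have horder : orderOf x = p ^ 2 := by
    obtain ⟨k, hk3, hord⟩ := (Nat.dvd_prime_pow hp).1 (hG ▸ orderOf_dvd_natCard x)
    have hk2 : 2 ≤ k := by
      by_contra hk
      have hdvd : orderOf x ∣ p := by
        rw [hord]
        calc p ^ k ∣ p ^ 1 := pow_dvd_pow p (by omega)
          _ = p := pow_one p
      exact hx (orderOf_dvd_iff_pow_eq_one.mp hdvd)
    have : k ≠ 3 := fun h => hnotcyc x (by rw [hord, h])
    have : k = 2 := by omega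
    rw [hord, this]
  -- Step 2: x^p is a nontrivial central element of order p
  have hxpZ : x ^ p ∈ Subgroup.center G := hpowZ x
  have hordxp : orderOf (x ^ p) = p := by
    rw [orderOf_pow, horder]
    have hgcd : Nat.gcd (p ^ 2) p = p := Nat.gcd_eq_right (dvd_pow_self p two_ne_zero)
    rw [hgcd, pow_two, Nat.mul_div_cancel _ hp.pos]
  -- Step 3: the center is generated by x^p
  have hZeq : Subgroup.center G = Subgroup.zpowers (x ^ p) := by
    refine (Subgroup.eq_of_le_of_card_ge (Subgroup.zpowers_le.mpr hxpZ) ?_).symm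
    rw [hZcard, Nat.card_zpowers, hordxp]
  -- Step 4: U = <x> has cardinality p²
  set U : Subgroup G := Subgroup.zpowers x with hU
  have hUcard : Nat.card U = p ^ 2 := by rw [hU, Nat.card_zpowers, horder]
  have hZU : Subgroup.center G ≤ U :=
    hZeq ▸ Subgroup.zpowers_le.mpr ⟨(p : ℤ), by simp⟩
  -- Step 5: conjugates of x stay in U
  have hconj_mem : ∀ h : G, h * x * h⁻¹ ∈ U := by
    intro h
    have h1 : h * x⁻¹ * h⁻¹ * x ∈ Subgroup.center G := by
      have := hcommZ x h⁻¹
      simpa using this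
    have h2 : x⁻¹ * (h * x * h⁻¹) ∈ Subgroup.center G := by
      have := (Subgroup.center G).inv_mem h1
      simpa [mul_assoc] using this
    have : h * x * h⁻¹ = x * (x⁻¹ * (h * x * h⁻¹)) := by group
    rw [this]
    exact U.mul_mem (Subgroup.mem_zpowers x) (hZU h2)
  haveI hUnorm : U.Normal := by
    constructor
    intro g hg h
    obtain ⟨k, rfl⟩ := Subgroup.mem_zpowers_iff.mp hg
    have : h * x ^ k * h⁻¹ = (h * x * h⁻¹) ^ k := by rw [conj_zpow]
    rw [this]
    exact Subgroup.zpow_mem U (hconj_mem h) k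
  -- Step 7: find g outside U
  have hUne : U ≠ ⊤ := by
    intro h
    have : Nat.card U = Nat.card G := by rw [h, Subgroup.card_top]
    rw [hUcard, hG] at this
    have := Nat.pow_right_injective hp.two_le this
    omega
  obtain ⟨g, hgU⟩ : ∃ g : G, g ∉ U := by
    by_contra h
    push_neg at h
    exact hUne ((Subgroup.eq_top_iff' U).mpr h)
  -- Step 8: g x g⁻¹ = x^(1+pt)
  have hcomm_g : x⁻¹ * (g * x * g⁻¹) ∈ Subgroup.center G := by
    have h1 : g * x⁻¹ * g⁻¹ * x ∈ Subgroup.center G := by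
      have := hcommZ x g⁻¹
      simpa using this
    have := (Subgroup.center G).inv_mem h1
    simpa [mul_assoc] using this
  obtain ⟨T, hT⟩ := Subgroup.mem_zpowers_iff.mp (hZeq ▸ hcomm_g)
  set t : ℕ := (T % (p : ℤ)).toNat with ht_def
  have htlt : t < p := by
    have h1 : 0 ≤ T % (p : ℤ) := Int.emod_nonneg T (by exact_mod_cast hp.pos.ne')
    have h2 : T % (p : ℤ) < p := Int.emod_lt_of_pos T (by exact_mod_cast hp.pos)
    omega
  have hTt : (x ^ p) ^ T = (x ^ p) ^ t := by
    have h0 := zpow_mod_orderOf (x ^ p) T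
    rw [hordxp] at h0
    rw [← h0, ← zpow_natCast (x ^ p) t]
    congr 1
    rw [ht_def]
    exact (Int.toNat_of_nonneg (Int.emod_nonneg T (by exact_mod_cast hp.pos.ne'))).symm
  have hgx : g * x * g⁻¹ = x ^ (1 + p * t) := by
    have : g * x * g⁻¹ = x * (x ^ p) ^ t := by
      rw [← hTt, hT]; group
    rw [this, ← pow_mul, ← pow_succ']
    congr 1
    omega
  -- Step 9: t ≠ 0
  have ht0 : t ≠ 0 := by
    intro htz
    rw [htz, Nat.mul_zero, Nat.add_zero, pow_one] at hgx
    have hcomm_xg : x * g = g * x := by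
      have : g * x = x * g := by
        calc g * x = g * x * g⁻¹ * g := by group
          _ = x * g := by rw [hgx]
      exact this.symm
    have hHtop : Subgroup.closure {x, g} = ⊤ := by
      refine top_of_proper hp hG hUcard ?_ (Subgroup.subset_closure (by simp)) hgU
      exact Subgroup.zpowers_le.mpr (Subgroup.subset_closure (by simp))
    exact hnab (comm_of_closure_pair hHtop hcomm_xg)
  -- Step 10: conjugation by powers of g
  have hconjpow : ∀ s : ℕ, g ^ s * x * (g ^ s)⁻¹ = x ^ ((1 + p * t) ^ s) := by
    intro s
    induction s with
    | zero => simp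
    | succ s ih =>
        calc g ^ (s+1) * x * (g ^ (s+1))⁻¹
            = g * (g ^ s * x * (g ^ s)⁻¹) * g⁻¹ := by
              rw [pow_succ']; group
          _ = g * x ^ ((1 + p * t) ^ s) * g⁻¹ := by rw [ih]
          _ = (g * x * g⁻¹) ^ ((1 + p * t) ^ s) := by rw [conj_pow]
          _ = x ^ ((1 + p * t) * (1 + p * t) ^ s) := by rw [hgx, ← pow_mul]
          _ = x ^ ((1 + p * t) ^ (s + 1)) := by rw [← pow_succ']
  -- Step 11: (1+pt)^s ≡ 1 + pts mod p²
  have hmod : ∀ s : ℕ, (1 + p * t) ^ s ≡ 1 + p * t * s [MOD p ^ 2] := by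
    intro s
    induction s with
    | zero => simpa using Nat.ModEq.refl 1
    | succ s ih =>
        have h1 : (1 + p * t) ^ (s + 1) = (1 + p * t) ^ s * (1 + p * t) := pow_succ _ _
        have h2 : (1 + p * t) ^ s * (1 + p * t) ≡ (1 + p * t * s) * (1 + p * t) [MOD p ^ 2] :=
          Nat.ModEq.mul_right _ ih
        have h3 : (1 + p * t * s) * (1 + p * t) ≡ 1 + p * t * (s + 1) [MOD p ^ 2] := by
          have he : (1 + p * t * s) * (1 + p * t) = 1 + p * t * (s + 1) + p ^ 2 * (t ^ 2 * s) := by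
            ring
          have h4 : 1 + p * t * (s + 1) ≡ 1 + p * t * (s + 1) + p ^ 2 * (t ^ 2 * s)
              [MOD p ^ 2] :=
            (Nat.modEq_iff_dvd' (Nat.le_add_right _ _)).mpr
              (by rw [Nat.add_sub_cancel_left]; exact dvd_mul_right _ _)
          rw [he]
          exact h4.symm
        rw [h1]
        exact h2.trans h3
  -- Step 12: choose s with t*s ≡ 1 mod p
  haveI : NeZero p := ⟨hp.pos.ne'⟩
  have htzmod : (t : ZMod p) ≠ 0 := by
    rw [Ne, ZMod.natCast_eq_zero_iff]
    exact Nat.not_dvd_of_pos_of_lt (Nat.pos_of_ne_zero ht0) htlt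
  set s : ℕ := ((t : ZMod p)⁻¹).val with hs_def
  have hst : t * s ≡ 1 [MOD p] := by
    have : ((t * s : ℕ) : ZMod p) = ((1 : ℕ) : ZMod p) := by
      push_cast
      rw [hs_def, ZMod.natCast_val, ZMod.cast_id]
      exact mul_inv_cancel₀ htzmod
    exact (ZMod.natCast_eq_natCast_iff _ _ _).mp this
  have hps : ¬ p ∣ s := by
    intro hdvd
    have : t * s ≡ 0 [MOD p] := (Nat.modEq_zero_iff_dvd).mpr (hdvd.mul_left t)
    have h1 : (1 : ℕ) ≡ 0 [MOD p] := hst.symm.trans this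
    have := (Nat.modEq_zero_iff_dvd).mp h1
    exact hp.one_lt.ne' (Nat.dvd_one.mp this)
  -- Step 13: g' = g^s conjugates x to x^(p+1)
  set g' : G := g ^ s with hg'_def
  have hxppow : x ^ p ^ 2 = 1 := by rw [← horder, pow_orderOf_eq_one]
  have hconj' : g' * x * g'⁻¹ = x ^ (p + 1) := by
    rw [hg'_def, hconjpow s]
    rw [pow_eq_pow_iff_modEq, horder]
    have h1 : (1 + p * t) ^ s ≡ 1 + p * (t * s) [MOD p ^ 2] := by
      have := hmod s
      rwa [mul_assoc] at this
    refine h1.trans ?_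
    have h2 : p * (t * s) ≡ p * 1 [MOD p * p] := Nat.ModEq.mul_left' p hst
    have h3 : 1 + p * (t * s) ≡ 1 + p * 1 [MOD p ^ 2] := by
      rw [pow_two]
      exact Nat.ModEq.add_left 1 h2
    have h5 : (1 : ℕ) + p * 1 = p + 1 := by omega
    rw [← h5]
    exact h3
  have hgx' : g' * x = x ^ (p + 1) * g' := by
    calc g' * x = (g' * x * g'⁻¹) * g' := by group
      _ = x ^ (p + 1) * g' := by rw [hconj']
  -- Step 14: g' ∉ U
  have hg'U : g' ∉ U := by
    intro hmem
    have hQcard : Nat.card (G ⧸ U) = p := by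
      have hquot : Nat.card G = Nat.card (G ⧸ U) * Nat.card U :=
        Subgroup.card_eq_card_quotient_mul_card_subgroup U
      rw [hG, hUcard] at hquot
      have h3 : Nat.card (G ⧸ U) * p ^ 2 = p * p ^ 2 := by rw [← hquot]; ring
      exact Nat.eq_of_mul_eq_mul_right (pow_pos hp.pos 2) h3
    have hmkg : (QuotientGroup.mk' U g) ≠ 1 := by
      rw [Ne, QuotientGroup.mk'_apply, QuotientGroup.eq_one_iff]
      exact hgU
    have hordg : orderOf (QuotientGroup.mk' U g) = p := by
      have hdvd : orderOf (QuotientGroup.mk' U g) ∣ p := hQcard ▸ orderOf_dvd_natCard _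
      rcases (Nat.Prime.eq_one_or_self_of_dvd hp _ hdvd) with h | h
      · exact absurd (orderOf_eq_one_iff.mp h) hmkg
      · exact h
    have : (QuotientGroup.mk' U g) ^ s = 1 := by
      rw [← map_pow, ← hg'_def, QuotientGroup.mk'_apply, QuotientGroup.eq_one_iff]
      exact hmem
    rw [← orderOf_dvd_iff_pow_eq_one, hordg] at this
    exact hps this
  -- Step 15: g'^p = (x^p)^m
  obtain ⟨M, hM⟩ := Subgroup.mem_zpowers_iff.mp (hZeq ▸ hpowZ g')
  set m : ℕ := (M % (p : ℤ)).toNat with hm_def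
  have hMm : (x ^ p) ^ M = (x ^ p) ^ m := by
    have h0 := zpow_mod_orderOf (x ^ p) M
    rw [hordxp] at h0
    rw [← h0, ← zpow_natCast (x ^ p) m]
    congr 1
    rw [hm_def]
    exact (Int.toNat_of_nonneg (Int.emod_nonneg M (by exact_mod_cast hp.pos.ne'))).symm
  have hg'p : g' ^ p = x ^ (p * m) := by
    rw [← hM, hMm, ← pow_mul]
  -- Step 16: define v
  set A : ℕ := m * (p ^ 2 - 1) with hA_def
  have hA1 : (p ^ 2 - 1) + 1 = p ^ 2 := Nat.succ_pred_eq_of_pos (pow_pos hp.pos 2)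
  set v : G := x ^ A * g' with hv_def
  have hcZv : x ^ (p * A) ∈ Subgroup.center G := by
    rw [hZeq, pow_mul]
    exact Subgroup.mem_zpowers_iff.mpr ⟨(A : ℤ), zpow_natCast (x ^ p) A⟩
  have hc_comm : ∀ y : G, x ^ (p * A) * y = y * x ^ (p * A) := fun y =>
    ((Subgroup.mem_center_iff.mp hcZv) y).symm
  -- conjugation of powers of x by g'
  have hconjA : g' * x ^ A * g'⁻¹ = x ^ ((p + 1) * A) := by
    have : g' * x ^ A * g'⁻¹ = (g' * x * g'⁻¹) ^ A := by rw [conj_pow]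
    rw [this, hconj', ← pow_mul]
  have hba : g' * x ^ A = x ^ A * g' * x ^ (p * A) := by
    calc g' * x ^ A = (g' * x ^ A * g'⁻¹) * g' := by group
      _ = x ^ ((p + 1) * A) * g' := by rw [hconjA]
      _ = x ^ A * x ^ (p * A) * g' := by rw [← pow_add]; ring_nf
      _ = x ^ A * (x ^ (p * A) * g') := by rw [mul_assoc]
      _ = x ^ A * (g' * x ^ (p * A)) := by rw [hc_comm g']
      _ = x ^ A * g' * x ^ (p * A) := by rw [mul_assoc]
  have hCA : Commute (x ^ (p * A)) (x ^ A) := (Commute.refl x).pow_pow _ _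
  have hCB : Commute (x ^ (p * A)) g' := hc_comm g'
  have hvp : v ^ p = 1 := by
    rw [hv_def, mul_pow_central hba hCA hCB p]
    have h1 : (x ^ A) ^ p * g' ^ p = 1 := by
      rw [← pow_mul, hg'p, ← pow_add]
      have he : A * p + p * m = p ^ 2 * (m * p) := by
        rw [hA_def]
        calc m * (p ^ 2 - 1) * p + p * m = ((p ^ 2 - 1) + 1) * (m * p) := by ring
          _ = p ^ 2 * (m * p) := by rw [hA1]
      rw [he, pow_mul, hxppow, one_pow]
    have h2 : (x ^ (p * A)) ^ p.choose 2 = 1 := by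
      obtain ⟨k, hk⟩ := odd_prime_dvd_choose_two hp hodd
      rw [hk, ← pow_mul]
      have he : p * A * (p * k) = p ^ 2 * (A * k) := by ring
      rw [he, pow_mul, hxppow, one_pow]
    rw [h2, mul_one, h1]
  have hvx : v * x = x ^ (p + 1) * v := by
    rw [hv_def]
    calc x ^ A * g' * x = x ^ A * (x ^ (p + 1) * g') := by rw [mul_assoc, hgx']
      _ = x ^ (p + 1) * (x ^ A * g') := by
          rw [← mul_assoc, ← pow_add, Nat.add_comm A (p+1), pow_add, mul_assoc]
  have hvU : v ∉ U := by
    intro hmem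
    have : g' ∈ U := by
      have : g' = (x ^ A)⁻¹ * v := by rw [hv_def]; group
      rw [this]
      exact U.mul_mem (U.inv_mem (U.pow_mem (Subgroup.mem_zpowers x) A)) hmem
    exact hg'U this
  have hgen : Subgroup.closure {x, v} = ⊤ := by
    refine top_of_proper hp hG hUcard ?_ (Subgroup.subset_closure (by simp)) hvU
    exact Subgroup.zpowers_le.mpr (Subgroup.subset_closure (by simp))
  exact ⟨x, v, hxppow, hvp, hvx, hgen⟩

end SemiGens

section SemiIso
variable {p : ℕ} {G : Type*} [Group G]

lemma semi_presented_rels (p : ℕ) :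
    (PresentedGroup.of 0 : PresentedGroup (semidirectRels p)) ^ p ^ 2 = 1 ∧
    (PresentedGroup.of 1 : PresentedGroup (semidirectRels p)) ^ p = 1 ∧
    (PresentedGroup.of 1 : PresentedGroup (semidirectRels p)) * PresentedGroup.of 0 =
      PresentedGroup.of 0 ^ (p + 1) * PresentedGroup.of 1 := by
  refine ⟨?_, ?_, ?_⟩
  · have := presented_rel_one (rels := semidirectRels p) (r := FreeGroup.of 0 ^ p ^ 2)
      (by simp [semidirectRels])
    rw [map_pow] at this; exact this
  · have := presented_rel_one (rels := semidirectRels p) (r := FreeGroup.of 1 ^ p)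
      (by simp [semidirectRels])
    rw [map_pow] at this; exact this
  · have := presented_rel_one (rels := semidirectRels p)
      (r := (FreeGroup.of 1 * FreeGroup.of 0) *
        (FreeGroup.of 0 ^ (p + 1) * FreeGroup.of 1)⁻¹)
      (by simp [semidirectRels])
    rw [map_mul, map_inv, mul_inv_eq_one, map_mul, map_mul, map_pow] at this
    exact this

lemma heis_presented_rels (p : ℕ) :
    (PresentedGroup.of 0 : PresentedGroup (heisenbergRels p)) ^ p = 1 ∧
    (PresentedGroup.of 1 : PresentedGroup (heisenbergRels p)) ^ p = 1 ∧
    (PresentedGroup.of 2 : PresentedGroup (heisenbergRels p)) ^ p = 1 ∧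
    Commute (PresentedGroup.of 2 : PresentedGroup (heisenbergRels p)) (PresentedGroup.of 0) ∧
    Commute (PresentedGroup.of 2 : PresentedGroup (heisenbergRels p)) (PresentedGroup.of 1) ∧
    (PresentedGroup.of 1 : PresentedGroup (heisenbergRels p)) * PresentedGroup.of 0 =
      PresentedGroup.of 0 * PresentedGroup.of 1 * PresentedGroup.of 2 := by
  refine ⟨?_, ?_, ?_, ?_, ?_, ?_⟩
  · have := presented_rel_one (rels := heisenbergRels p) (r := FreeGroup.of 0 ^ p)
      (by simp [heisenbergRels])
    rw [map_pow] at this; exact this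
  · have := presented_rel_one (rels := heisenbergRels p) (r := FreeGroup.of 1 ^ p)
      (by simp [heisenbergRels])
    rw [map_pow] at this; exact this
  · have := presented_rel_one (rels := heisenbergRels p) (r := FreeGroup.of 2 ^ p)
      (by simp [heisenbergRels])
    rw [map_pow] at this; exact this
  · have := presented_rel_one (rels := heisenbergRels p)
      (r := (FreeGroup.of 2 * FreeGroup.of 0) * (FreeGroup.of 0 * FreeGroup.of 2)⁻¹)
      (by simp [heisenbergRels])
    rw [map_mul, map_inv, mul_inv_eq_one, map_mul, map_mul] at this
    exact this
  · have := presented_rel_one (rels := heisenbergRels p)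
      (r := (FreeGroup.of 2 * FreeGroup.of 1) * (FreeGroup.of 1 * FreeGroup.of 2)⁻¹)
      (by simp [heisenbergRels])
    rw [map_mul, map_inv, mul_inv_eq_one, map_mul, map_mul] at this
    exact this
  · have := presented_rel_one (rels := heisenbergRels p)
      (r := (FreeGroup.of 1 * FreeGroup.of 0) *
        (FreeGroup.of 0 * FreeGroup.of 1 * FreeGroup.of 2)⁻¹)
      (by simp [heisenbergRels])
    rw [map_mul, map_inv, mul_inv_eq_one, map_mul, map_mul, map_mul] at this
    exact this

lemma heis_presented_exp (hp : p.Prime) (hodd : Odd p) :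
    ∀ y : PresentedGroup (heisenbergRels p), y ^ p = 1 := by
  obtain ⟨h1, h2, h3, h4, h5, h6⟩ := heis_presented_rels p
  exact heis_exp hp hodd (closure_heis_gen p) h1 h2 h3 h4 h5 h6

lemma semi_presented_card (hp : 0 < p) :
    Nat.card (PresentedGroup (semidirectRels p)) ≤ p ^ 3 ∧
      Finite (PresentedGroup (semidirectRels p)) := by
  obtain ⟨h1, h2, h3⟩ := semi_presented_rels p
  have hform := semi_form hp (closure_semi_gen p) h1 h2 h3
  have hsurj : Function.Surjective
      (fun t : Fin (p ^ 2) × Fin p =>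
        (PresentedGroup.of 0 : PresentedGroup (semidirectRels p)) ^ (t.1 : ℕ) *
          PresentedGroup.of 1 ^ (t.2 : ℕ)) := by
    intro x
    obtain ⟨a, b, ha, hb, rfl⟩ := hform x
    exact ⟨⟨⟨a, ha⟩, ⟨b, hb⟩⟩, rfl⟩
  haveI : Finite (PresentedGroup (semidirectRels p)) := Finite.of_surjective _ hsurj
  refine ⟨?_, inferInstance⟩
  have := Nat.card_le_card_of_surjective _ hsurj
  calc Nat.card (PresentedGroup (semidirectRels p))
      ≤ Nat.card (Fin (p ^ 2) × Fin p) := this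
    _ = p ^ 3 := by simp [Nat.card_prod]; ring

lemma semi_iso (hp : p.Prime) (hodd : Odd p) (hG : Nat.card G = p ^ 3)
    (hnab : ¬ ∀ a b : G, a * b = b * a) {x : G} (hx : x ^ p ≠ 1) :
    Nonempty (G ≃* PresentedGroup (semidirectRels p)) := by
  obtain ⟨u, v, hu, hv, hvu, hgen⟩ := semi_gens hp hodd hG hnab hx
  set f : Fin 2 → G := ![u, v] with hf
  have hrels : ∀ r ∈ semidirectRels p, FreeGroup.lift f r = 1 := by
    intro r hr
    simp only [semidirectRels, Set.mem_insert_iff, Set.mem_singleton_iff] at hr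
    rcases hr with rfl | rfl | rfl
    · simp only [map_pow, FreeGroup.lift_apply_of, hf]
      simpa using hu
    · simp only [map_pow, FreeGroup.lift_apply_of, hf]
      simpa using hv
    · simp only [map_mul, map_inv, map_pow, FreeGroup.lift_apply_of, hf, mul_inv_eq_one]
      simpa using hvu
  set φ : PresentedGroup (semidirectRels p) →* G := PresentedGroup.toGroup hrels with hφ
  have hφu : φ (PresentedGroup.of 0) = u := by simp [hφ, PresentedGroup.toGroup.of, hf]
  have hφv : φ (PresentedGroup.of 1) = v := by simp [hφ, PresentedGroup.toGroup.of, hf]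
  have hsurj : Function.Surjective φ := by
    rw [← MonoidHom.range_eq_top]
    rw [← top_le_iff, ← hgen, Subgroup.closure_le]
    rintro y (rfl | rfl)
    · exact ⟨PresentedGroup.of 0, hφu⟩
    · exact ⟨PresentedGroup.of 1, hφv⟩
  obtain ⟨hcard, hfin⟩ := semi_presented_card (p := p) hp.pos
  have hbij : Function.Bijective φ :=
    hsurj.bijective_of_nat_card_le (by rw [hG]; exact hcard)
  exact ⟨(MulEquiv.ofBijective φ hbij).symm⟩

end SemiIso

/-- For an odd prime `p`, every non-abelian group of order `p³` is isomorphic to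
exactly one of the Heisenberg group (exponent `p`) and the semidirect product
`C_{p²} ⋊ C_p` (exponent `p²`). -/
theorem stmt_13 (p : ℕ) (hp : p.Prime) (hodd : Odd p)
    (G : Type*) [Group G] (hG : Nat.card G = p ^ 3)
    (hnab : ¬ ∀ a b : G, a * b = b * a) :
    Xor' (Nonempty (G ≃* PresentedGroup (heisenbergRels p)))
      (Nonempty (G ≃* PresentedGroup (semidirectRels p))) := by
  by_cases hexp : ∀ x : G, x ^ p = 1
  · refine Or.inl ⟨heis_iso hp hodd hG hnab hexp, ?_⟩
    rintro ⟨e⟩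
    have hPexp : ∀ y : PresentedGroup (semidirectRels p), y ^ p = 1 := by
      intro y
      have hy : y = e (e.symm y) := (e.apply_symm_apply y).symm
      rw [hy, ← map_pow, hexp, map_one]
    obtain ⟨h1, h2, h3⟩ := semi_presented_rels p
    have hUp : (PresentedGroup.of 0 : PresentedGroup (semidirectRels p)) ^ p = 1 := hPexp _
    have hcomm : (PresentedGroup.of 0 : PresentedGroup (semidirectRels p)) *
        PresentedGroup.of 1 = PresentedGroup.of 1 * PresentedGroup.of 0 := by
      rw [h3, pow_succ, hUp, one_mul]
    have hall := comm_of_closure_pair (closure_semi_gen p) hcomm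
    apply hnab
    intro a b
    apply e.injective
    rw [map_mul, map_mul, hall]
  · push_neg at hexp
    obtain ⟨x, hx⟩ := hexp
    refine Or.inr ⟨semi_iso hp hodd hG hnab hx, ?_⟩
    rintro ⟨e⟩
    apply hx
    have h1 : e (x ^ p) = 1 := by
      rw [map_pow]
      exact heis_presented_exp hp hodd (e x)
    calc x ^ p = e.symm (e (x ^ p)) := (e.symm_apply_apply _).symm
      _ = 1 := by rw [h1, map_one]
end

section
/- Let p be an odd prime, e a primitive root mod p, L a number field containing ζ_p with a cyclic degree p-1 subextension structure given by an automorphism τ̄ of order p-1, and K the fixed field data as in the setup. Suppose q is a rational prime that does not split completely in K = ℚ(ζ_p) and I is a fractional ideal of K with N_{K/ℚ}(I) = ℤq^l, invariant under τ^g where g < p-1 is the decomposition number of q in K/ℚ. Then Φ̃(I) = Π_{j=0}^{p-2} τ^j(I)^{e^{p-(j+2)}} is the p-th power of a fractional ideal of K. -/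
open NumberField
open scoped nonZeroDivisors

/-- Let `K = ℚ(ζ_p)` (`p` an odd prime), `e` a primitive root mod `p`, `τ` the
generator of `Gal(K/ℚ)` with `τ ζ = ζ^e`, and let `T` denote the induced action
of `τ` on the group of fractional ideals of `K`.  Let `q ≠ p` be a rational
prime that does not split completely in `K`, with decomposition number
`g = (p-1)/ord_p(q) < p - 1`, and let `I` be a fractional ideal of `K` with
`N_{K/ℚ}(I) = ℤq^l` and `τ^g I = I`.  Then
`Φ̃(I) = ∏_{j=0}^{p-2} τ^j(I)^{e^{p-(j+2)}}` is the `p`-th power of a fractional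
ideal of `K`. -/
theorem stmt_18 (p : ℕ) (hp : p.Prime) (hodd : Odd p)
    (e : ℕ) (he : orderOf (e : ZMod p) = p - 1)
    (K : Type*) [Field K] [NumberField K]
    (ζ : K) (hζ : IsPrimitiveRoot ζ p) (hKgen : Algebra.adjoin ℚ {ζ} = ⊤)
    (τ : K ≃ₐ[ℚ] K) (hτ : τ ζ = ζ ^ e)
    (T : FractionalIdeal (RingOfIntegers K)⁰ K ≃*
      FractionalIdeal (RingOfIntegers K)⁰ K)
    (hT : ∀ I : FractionalIdeal (RingOfIntegers K)⁰ K,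
      ((T I : Submodule (RingOfIntegers K) K) : Set K) =
        τ '' ((I : Submodule (RingOfIntegers K) K) : Set K))
    (q : ℕ) (hq : q.Prime) (hqp : q ≠ p)
    (hnsplit : (q : ZMod p) ≠ 1)
    (g : ℕ) (hg : g = (p - 1) / orderOf (q : ZMod p)) (hglt : g < p - 1)
    (I : FractionalIdeal (RingOfIntegers K)⁰ K) (hI0 : I ≠ 0)
    (l : ℤ) (hnorm : FractionalIdeal.absNorm I = (q : ℚ) ^ l)
    (hinv : (T ^ g) I = I) :
    ∃ J : FractionalIdeal (RingOfIntegers K)⁰ K,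
      (∏ j ∈ Finset.range (p - 1), ((T ^ j) I) ^ (e ^ (p - (j + 2)))) =
        J ^ p := by
  classical
  haveI : Fact p.Prime := ⟨hp⟩
  have hp1 : 1 < p := hp.one_lt
  set f : ℕ := orderOf (q : ZMod p) with hf
  -- basic facts about f and g
  have hq0 : (q : ZMod p) ≠ 0 := by
    intro h
    have hd : p ∣ q := (ZMod.natCast_eq_zero_iff q p).mp h
    exact hqp ((Nat.prime_dvd_prime_iff_eq hp hq).mp hd).symm
  have hfd : f ∣ p - 1 :=
    orderOf_dvd_of_pow_eq_one (ZMod.pow_card_sub_one_eq_one hq0)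
  have hfpos : 0 < f := by
    refine orderOf_pos_iff.mpr (isOfFinOrder_iff_pow_eq_one.mpr ⟨p - 1, by omega, ?_⟩)
    exact ZMod.pow_card_sub_one_eq_one hq0
  have hgf : g * f = p - 1 := by
    rw [hg]; exact Nat.div_mul_cancel hfd
  have hgpos : 0 < g := by
    rcases Nat.eq_zero_or_pos g with h | h
    · exfalso; rw [h, zero_mul] at hgf; omega
    · exact h
  -- the key invariance: T^j I only depends on j mod g
  have hfixpow : ∀ k : ℕ, ((T ^ g) ^ k) I = I := by
    intro k
    induction k with
    | zero => simp
    | succ n ih =>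
      rw [pow_succ, MulAut.mul_apply, hinv, ih]
  have hTmod : ∀ j : ℕ, (T ^ j) I = (T ^ (j % g)) I := by
    intro j
    conv_lhs => rw [show j = j % g + g * (j / g) from (Nat.mod_add_div j g).symm]
    rw [pow_add, MulAut.mul_apply, pow_mul, hfixpow]
  -- x = e mod p, an element of order p - 1
  set x : ZMod p := (e : ZMod p) with hx
  have hxg1 : x ^ g ≠ 1 := by
    intro h
    have hd := orderOf_dvd_of_pow_eq_one h
    rw [he] at hd
    have := Nat.le_of_dvd hgpos hd
    omega
  have hxgf : (x ^ g) ^ f = 1 := by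
    rw [← pow_mul, hgf, ← he, pow_orderOf_eq_one]
  -- geometric sum vanishes
  have hgeom : ∑ k ∈ Finset.range f, (x ^ g) ^ k = 0 := by
    have h2 : (∑ k ∈ Finset.range f, (x ^ g) ^ k) * (x ^ g - 1) = 0 := by
      rw [geom_sum_mul, hxgf, sub_self]
    rcases mul_eq_zero.mp h2 with h | h
    · exact h
    · exact absurd (sub_eq_zero.mp h) hxg1
  -- per-residue exponent sums
  set S : ℕ → ℕ := fun r => ∑ k ∈ Finset.range f, e ^ (p - (r + g * k + 2)) with hS
  have hexp : ∀ r < g, ∀ k < f, p - (r + g * k + 2) = (g - 1 - r) + g * (f - 1 - k) := by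
    intro r hr k hk
    have h1 : g * (f - 1 - k) + g * k + g = g * f := by
      have h2 : (f - 1 - k) + k + 1 = f := by omega
      calc g * (f - 1 - k) + g * k + g = g * ((f - 1 - k) + k + 1) := by ring
        _ = g * f := by rw [h2]
    omega
  have hdvd : ∀ r < g, p ∣ S r := by
    intro r hr
    have hcast : ((S r : ℕ) : ZMod p) = 0 := by
      push_cast [hS]
      have : ∀ k ∈ Finset.range f,
          x ^ (p - (r + g * k + 2)) = x ^ (g - 1 - r) * (x ^ g) ^ (f - 1 - k) := by
        intro k hk
        rw [← pow_mul, ← pow_add, hexp r hr k (Finset.mem_range.mp hk)]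
      rw [Finset.sum_congr rfl this, ← Finset.mul_sum,
        Finset.sum_range_reflect (fun k => (x ^ g) ^ k) f, hgeom, mul_zero]
    exact (ZMod.natCast_eq_zero_iff (S r) p).mp hcast
  -- the candidate ideal
  refine ⟨∏ r ∈ Finset.range g, ((T ^ r) I) ^ (S r / p), ?_⟩
  -- reindex the product over range (p-1) = range (g * f)
  have hprod1 : (∏ j ∈ Finset.range (p - 1), ((T ^ j) I) ^ (e ^ (p - (j + 2))))
      = ∏ rk ∈ Finset.range g ×ˢ Finset.range f,
          ((T ^ rk.1) I) ^ (e ^ (p - (rk.1 + g * rk.2 + 2))) := by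
    rw [← hgf]
    refine Finset.prod_nbij' (fun j => (j % g, j / g)) (fun rk => rk.1 + g * rk.2)
      ?_ ?_ ?_ ?_ ?_
    · intro j hj
      simp only [Finset.mem_product, Finset.mem_range] at *
      constructor
      · exact Nat.mod_lt _ hgpos
      · exact Nat.div_lt_of_lt_mul (by omega)
    · intro rk hrk
      simp only [Finset.mem_product, Finset.mem_range] at *
      obtain ⟨h1, h2⟩ := hrk
      calc rk.1 + g * rk.2 < g + g * rk.2 := by omega
        _ = g * (rk.2 + 1) := by ring
        _ ≤ g * f := Nat.mul_le_mul_left g (by omega)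
    · intro j hj
      exact Nat.mod_add_div j g
    · intro rk hrk
      simp only [Finset.mem_product, Finset.mem_range] at hrk
      obtain ⟨h1, h2⟩ := hrk
      have hmod : (rk.1 + g * rk.2) % g = rk.1 := by
        rw [Nat.add_mul_mod_self_left, Nat.mod_eq_of_lt h1]
      have hdiv : (rk.1 + g * rk.2) / g = rk.2 := by
        rw [Nat.add_mul_div_left _ _ hgpos, Nat.div_eq_of_lt h1, zero_add]
      exact Prod.ext hmod hdiv
    · intro j hj
      have h1 : j % g + g * (j / g) = j := Nat.mod_add_div j g
      rw [hTmod j, h1]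
  have hprod2 : (∏ rk ∈ Finset.range g ×ˢ Finset.range f,
      ((T ^ rk.1) I) ^ (e ^ (p - (rk.1 + g * rk.2 + 2))))
      = ∏ r ∈ Finset.range g, ∏ k ∈ Finset.range f,
          ((T ^ r) I) ^ (e ^ (p - (r + g * k + 2))) :=
    Finset.prod_product' (Finset.range g) (Finset.range f)
      (fun r k => ((T ^ r) I) ^ (e ^ (p - (r + g * k + 2))))
  rw [hprod1, hprod2, ← Finset.prod_pow]
  refine Finset.prod_congr rfl ?_
  intro r hr
  have hr' : r < g := Finset.mem_range.mp hr
  rw [Finset.prod_pow_eq_pow_sum]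
  rw [← pow_mul, Nat.div_mul_cancel (hdvd r hr')]
end
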